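/- (Shift case, order bound for removing operators.) Let K[x][∂] be the Ore algebra with σ(x) = x+1 and δ = 0. Let L = ℓ₀ + ℓ₁∂ + ⋯ + ℓ_r∂^r with ℓ₀, ℓ_r ≠ 0, let p be an irreducible factor of ℓ_r, and suppose p^k is removable from L for some k ≥ 1. Let n ∈ ℕ be such that gcd(σⁿ(p), ℓ₀) ≠ 1 and gcd(σᵐ(p), ℓ₀) = 1 for all m > n. Then p^k is removable from L at order n. -/

import Mathlib

open Polynomial

/-- The Ore (skew polynomial) algebra `A[∂; σ, δ]`: a ring whose elements are
finite sums `∑ ι(aₙ)·∂ⁿ` with coefficients `aₙ ∈ A`, uniquely determined, and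
with commutation rule `∂·f = σ(f)·∂ + δ(f)`; `δ` is a `σ`-derivation. -/
structure OreAlgebra (A : Type*) [CommRing A] (σ : A ≃+* A) (δ : A → A) where
  carrier : Type*
  [ring : Ring carrier]
  ι : A →+* carrier
  d : carrier
  coeff : carrier → ℕ → A
  coeff_add : ∀ x y n, coeff (x + y) n = coeff x n + coeff y n
  coeff_iota_dpow : ∀ (a : A) (i n : ℕ), coeff (ι a * d ^ i) n = if i = n then a else 0
  support_finite : ∀ x, Set.Finite {n | coeff x n ≠ 0}
  coeff_ext : ∀ x y, (∀ n, coeff x n = coeff y n) → x = y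
  repr_eq : ∀ x, x = ∑ n ∈ (support_finite x).toFinset, ι (coeff x n) * d ^ n
  comm_rule : ∀ a : A, d * ι a = ι (σ a) * d + ι (δ a)
  delta_rule : ∀ a b : A, δ (a * b) = δ a * b + σ a * δ b

attribute [instance] OreAlgebra.ring

/-- `x` has order (degree in `∂`) exactly `n`. -/
def OreAlgebra.HasOrder {A : Type*} [CommRing A] {σ : A ≃+* A} {δ : A → A}
    (O : OreAlgebra A σ δ) (x : O.carrier) (n : ℕ) : Prop :=
  O.coeff x n ≠ 0 ∧ ∀ m, n < m → O.coeff x m = 0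

/-- An operator in `K(x)[∂]` has polynomial coefficients, i.e. lies in `K[x][∂]`. -/
def OreAlgebra.IsPoly {K : Type*} [Field K] {σ : RatFunc K ≃+* RatFunc K}
    {δ : RatFunc K → RatFunc K} (O : OreAlgebra (RatFunc K) σ δ) (x : O.carrier) : Prop :=
  ∀ i, ∃ q : Polynomial K, O.coeff x i = algebraMap (Polynomial K) (RatFunc K) q

/-- `P ∈ K(x)[∂]` is a `p`-removing operator of order `n` for `L` (where `L` has
order `rL`): `deg_∂(P) = n`, `PL ∈ K[x][∂]`, and
`σ^{-n}(lc_∂(PL)) = (w/(v·p))·lc_∂(L)` for some `v, w ∈ K[x]`, `v ≠ 0`,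
with `gcd(p, w) = 1`. -/
def OreAlgebra.IsRemoving {K : Type*} [Field K] {σ : RatFunc K ≃+* RatFunc K}
    {δ : RatFunc K → RatFunc K} (O : OreAlgebra (RatFunc K) σ δ)
    (p : Polynomial K) (L : O.carrier) (rL : ℕ) (P : O.carrier) (n : ℕ) : Prop :=
  O.HasOrder P n ∧ O.IsPoly (P * L) ∧
  ∃ v w : Polynomial K, v ≠ 0 ∧ IsCoprime p w ∧
    (⇑σ.symm)^[n] (O.coeff (P * L) (n + rL)) * algebraMap (Polynomial K) (RatFunc K) (v * p)
      = algebraMap (Polynomial K) (RatFunc K) w * O.coeff L rL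


namespace OreAlgebra

variable {A : Type*} [CommRing A] {σ : A ≃+* A} (O : OreAlgebra A σ (fun _ => 0))

lemma coeff_zero'' (n : ℕ) : O.coeff 0 n = 0 := by
  have h := O.coeff_iota_dpow 0 0 n
  simpa using h

lemma coeff_sum {β : Type*} (s : Finset β) (f : β → O.carrier) (n : ℕ) :
    O.coeff (∑ i ∈ s, f i) n = ∑ i ∈ s, O.coeff (f i) n := by
  classical
  induction s using Finset.induction_on with
  | empty => simpa using O.coeff_zero'' n
  | insert _ _ h ih =>
      rw [Finset.sum_insert h, O.coeff_add, ih, Finset.sum_insert h]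

lemma coeff_sub (x y : O.carrier) (n : ℕ) :
    O.coeff (x - y) n = O.coeff x n - O.coeff y n := by
  have h := O.coeff_add (x - y) y n
  rw [sub_add_cancel] at h
  exact eq_sub_of_add_eq h.symm

lemma d_mul_iota (a : A) : O.d * O.ι a = O.ι (σ a) * O.d := by
  have h := O.comm_rule a
  simpa using h

lemma coeff_iota (a : A) (n : ℕ) : O.coeff (O.ι a) n = if 0 = n then a else 0 := by
  have h := O.coeff_iota_dpow a 0 n
  simpa using h

lemma not_mem_support {y : O.carrier} {n : ℕ}
    (h : n ∉ (O.support_finite y).toFinset) : O.coeff y n = 0 := by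
  by_contra hc
  exact h ((O.support_finite y).mem_toFinset.mpr hc)

lemma coeff_iota_mul (a : A) (y : O.carrier) (n : ℕ) :
    O.coeff (O.ι a * y) n = a * O.coeff y n := by
  classical
  conv_lhs => rw [O.repr_eq y]
  rw [Finset.mul_sum]
  have hterm : ∀ j, O.ι a * (O.ι (O.coeff y j) * O.d ^ j)
      = O.ι (a * O.coeff y j) * O.d ^ j := by
    intro j; rw [← mul_assoc, ← map_mul]
  rw [Finset.sum_congr rfl (fun j _ => hterm j), O.coeff_sum]
  simp only [O.coeff_iota_dpow]
  rw [Finset.sum_ite_eq']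
  by_cases hn : n ∈ (O.support_finite y).toFinset
  · rw [if_pos hn]
  · rw [if_neg hn, O.not_mem_support hn, mul_zero]

lemma d_mul_repr (y : O.carrier) :
    O.d * y = ∑ j ∈ (O.support_finite y).toFinset,
      O.ι (σ (O.coeff y j)) * O.d ^ (j + 1) := by
  conv_lhs => rw [O.repr_eq y]
  rw [Finset.mul_sum]
  refine Finset.sum_congr rfl fun j _ => ?_
  rw [← mul_assoc, O.d_mul_iota, mul_assoc, ← pow_succ']

lemma coeff_d_mul_zero (y : O.carrier) : O.coeff (O.d * y) 0 = 0 := by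
  rw [O.d_mul_repr, O.coeff_sum]
  simp [O.coeff_iota_dpow]

lemma coeff_d_mul (y : O.carrier) (n : ℕ) :
    O.coeff (O.d * y) (n + 1) = σ (O.coeff y n) := by
  classical
  rw [O.d_mul_repr, O.coeff_sum]
  simp only [O.coeff_iota_dpow, add_left_inj]
  rw [Finset.sum_ite_eq']
  by_cases hn : n ∈ (O.support_finite y).toFinset
  · rw [if_pos hn]
  · rw [if_neg hn, O.not_mem_support hn, map_zero]

lemma coeff_dpow_mul_zero (i : ℕ) (y : O.carrier) :
    O.coeff (O.d ^ i * y) 0 = if i = 0 then O.coeff y 0 else 0 := by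
  cases i with
  | zero => simp
  | succ i => rw [pow_succ', mul_assoc, O.coeff_d_mul_zero]; simp

lemma coeff_mul_zero (x y : O.carrier) :
    O.coeff (x * y) 0 = O.coeff x 0 * O.coeff y 0 := by
  classical
  conv_lhs => rw [O.repr_eq x]
  rw [Finset.sum_mul, O.coeff_sum]
  have hterm : ∀ j ∈ (O.support_finite x).toFinset,
      O.coeff (O.ι (O.coeff x j) * O.d ^ j * y) 0
        = if j = 0 then O.coeff x 0 * O.coeff y 0 else 0 := by
    intro j _
    rw [mul_assoc, O.coeff_iota_mul, O.coeff_dpow_mul_zero]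
    by_cases hj : j = 0
    · subst hj; simp
    · simp [hj]
  rw [Finset.sum_congr rfl hterm, Finset.sum_ite_eq']
  by_cases h0 : 0 ∈ (O.support_finite x).toFinset
  · rw [if_pos h0]
  · rw [if_neg h0, O.not_mem_support h0, zero_mul]

end OreAlgebra

section ShiftFacts
variable {K : Type*} [Field K] {σ : RatFunc K ≃+* RatFunc K}

local notation "alg" => algebraMap (Polynomial K) (RatFunc K)

lemma symm_alg (hσ : ∀ q : Polynomial K, σ (alg q) = alg (q.comp (X + 1)))
    (q : Polynomial K) : σ.symm (alg q) = alg (q.comp (X - C 1)) := by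
  apply σ.injective
  rw [σ.apply_symm_apply, hσ, comp_assoc]
  congr 2
  simp [sub_comp]

lemma symm_iterate_alg (hσ : ∀ q : Polynomial K, σ (alg q) = alg (q.comp (X + 1)))
    (m : ℕ) (q : Polynomial K) :
    (⇑σ.symm)^[m] (alg q) = alg (q.comp (X - C (m : K))) := by
  induction m generalizing q with
  | zero => simp
  | succ m ih =>
      rw [Function.iterate_succ_apply, symm_alg hσ, ih, comp_assoc]
      congr 2
      rw [sub_comp, X_comp, C_comp, sub_sub, ← C_add]
      norm_num

lemma symm_iterate_mul (m : ℕ) (a b : RatFunc K) :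
    (⇑σ.symm)^[m] (a * b) = (⇑σ.symm)^[m] a * (⇑σ.symm)^[m] b := by
  induction m generalizing a b with
  | zero => rfl
  | succ m ih =>
      rw [Function.iterate_succ_apply, Function.iterate_succ_apply,
        Function.iterate_succ_apply, map_mul, ih]

end ShiftFacts


section Steps
variable {K : Type*} [Field K] {σ : RatFunc K ≃+* RatFunc K}
  (hσ : ∀ q : Polynomial K, σ (algebraMap (Polynomial K) (RatFunc K) q)
      = algebraMap (Polynomial K) (RatFunc K) (q.comp (X + 1)))
  (O : OreAlgebra (RatFunc K) σ (fun _ => 0))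

local notation "alg" => algebraMap (Polynomial K) (RatFunc K)

lemma symm_ne_zero {x : RatFunc K} (hx : x ≠ 0) : σ.symm x ≠ 0 := by
  intro h
  apply hx
  have := congrArg σ h
  simpa using this

include hσ in
lemma step_up (pp : Polynomial K) (L : O.carrier) (r m : ℕ)
    (h : ∃ P, O.IsRemoving pp L r P m) : ∃ P, O.IsRemoving pp L r P (m + 1) := by
  obtain ⟨P, ⟨hord, hpoly, v, w, hv, hw, heq⟩⟩ := h
  refine ⟨O.d * P, ⟨?_, ?_⟩ , ?_, v, w, hv, hw, ?_⟩
  · rw [O.coeff_d_mul]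
    intro h0
    apply hord.1
    have := congrArg σ.symm h0
    simpa using this
  · intro t ht
    match t, ht with
    | (s+1), ht =>
      rw [O.coeff_d_mul, hord.2 s (by omega), map_zero]
  · intro i
    rw [mul_assoc]
    match i with
    | 0 => exact ⟨0, by rw [O.coeff_d_mul_zero, map_zero]⟩
    | (t+1) =>
      obtain ⟨q, hq⟩ := hpoly t
      exact ⟨q.comp (X + 1), by rw [O.coeff_d_mul, hq, hσ]⟩
  · rw [mul_assoc]
    have e : m + 1 + r = (m + r) + 1 := by omega
    rw [e, O.coeff_d_mul, Function.iterate_succ_apply]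
    rw [show σ.symm (σ (O.coeff (P * L) (m + r))) = O.coeff (P * L) (m + r) from
      σ.symm_apply_apply _]
    exact heq

include hσ in
lemma step_down (p : Polynomial K) (k : ℕ) (L : O.carrier) (r : ℕ)
    (hL : O.IsPoly L) (hLo : O.HasOrder L r)
    (ℓ0 : Polynomial K) (h0 : O.coeff L 0 = alg ℓ0) (h0ne : ℓ0 ≠ 0)
    (m : ℕ) (hcop : IsCoprime (p.comp (X + C ((m + 1 : ℕ) : K))) ℓ0)
    (h : ∃ P, O.IsRemoving (p ^ k) L r P (m + 1)) :
    ∃ P, O.IsRemoving (p ^ k) L r P m := by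
  classical
  obtain ⟨P, ⟨hord, hpoly, v, w, hv, hw, heq⟩⟩ := h
  set b0 := O.coeff P 0 with hb0def
  obtain ⟨q0, hq0⟩ := hpoly 0
  have hl0ne : alg ℓ0 ≠ 0 := RatFunc.algebraMap_ne_zero h0ne
  have hq0' : b0 = alg q0 / alg ℓ0 := by
    rw [eq_div_iff hl0ne, ← h0, hb0def, ← O.coeff_mul_zero, hq0]
  set D := (b0).denom with hDdef
  have hD0 : D ∣ ℓ0 := (RatFunc.denom_dvd h0ne).mpr ⟨q0, hq0'⟩
  have hDne : D ≠ 0 := RatFunc.denom_ne_zero b0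
  have hDalgne : alg D ≠ 0 := RatFunc.algebraMap_ne_zero hDne
  have hDb0 : alg D * b0 = alg b0.num := by
    have h := RatFunc.num_div_denom b0
    conv_lhs => rw [← h]
    rw [mul_comm, div_mul_cancel₀ _ hDalgne]
  set P' := O.ι (alg D) * P with hP'def
  have hcP' : ∀ t, O.coeff P' t = alg D * O.coeff P t := fun t => O.coeff_iota_mul _ _ _
  set P1 := ∑ i ∈ Finset.range (m + 1), O.ι (σ.symm (O.coeff P' (i + 1))) * O.d ^ i
    with hP1def
  have hcP1 : ∀ t, O.coeff P1 t
      = if t < m + 1 then σ.symm (O.coeff P' (t + 1)) else 0 := by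
    intro t
    rw [hP1def, O.coeff_sum]
    simp only [O.coeff_iota_dpow]
    rw [Finset.sum_ite_eq']
    simp [Finset.mem_range]
  have hkey : O.d * P1 = P' - O.ι (alg D * b0) := by
    apply O.coeff_ext
    intro t
    match t with
    | 0 =>
      rw [O.coeff_d_mul_zero, O.coeff_sub, O.coeff_iota, hcP']
      rw [if_pos rfl, ← hb0def, sub_self]
    | (t+1) =>
      rw [O.coeff_d_mul, hcP1, O.coeff_sub, O.coeff_iota, hcP']
      rw [if_neg (by omega : ¬ (0 = t + 1)), sub_zero]
      by_cases ht : t < m + 1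
      · rw [if_pos ht, σ.apply_symm_apply]
      · rw [if_neg ht, map_zero, hord.2 (t + 1) (by omega), mul_zero]
  have hprod : ∀ t, O.coeff (P1 * L) t
      = σ.symm (alg D * O.coeff (P * L) (t + 1) - alg D * b0 * O.coeff L (t + 1)) := by
    intro t
    have h1 : σ (O.coeff (P1 * L) t) = O.coeff (O.d * (P1 * L)) (t + 1) :=
      (O.coeff_d_mul _ _).symm
    have h2 : O.d * (P1 * L) = P' * L - O.ι (alg D * b0) * L := by
      rw [← mul_assoc, hkey, sub_mul]
    have h3 : O.coeff (O.d * (P1 * L)) (t + 1)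
        = alg D * O.coeff (P * L) (t + 1) - alg D * b0 * O.coeff L (t + 1) := by
      rw [h2, O.coeff_sub, hP'def, mul_assoc, O.coeff_iota_mul, O.coeff_iota_mul]
    have := h1.trans h3
    rw [← this, σ.symm_apply_apply]
  refine ⟨P1, ⟨?_, ?_⟩, ?_, v, (D.comp (X - C ((m + 1 : ℕ) : K))) * w, hv, ?_, ?_⟩
  · -- leading coeff of P1 nonzero
    rw [hcP1, if_pos (by omega : m < m + 1), hcP']
    exact symm_ne_zero (mul_ne_zero hDalgne hord.1)
  · intro t ht
    rw [hcP1, if_neg (by omega)]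
  · -- IsPoly (P1 * L)
    intro t
    obtain ⟨qt, hqt⟩ := hpoly (t + 1)
    obtain ⟨lt, hlt⟩ := hL (t + 1)
    refine ⟨(D * qt - b0.num * lt).comp (X - C 1), ?_⟩
    rw [hprod, hqt, hlt]
    rw [show alg D * b0 * (alg lt) = alg b0.num * alg lt from by rw [hDb0]]
    rw [← map_mul, ← map_mul, ← map_sub, symm_alg hσ]
  · -- coprimality
    have hc1 : IsCoprime (p.comp (X + C ((m + 1 : ℕ) : K))) D :=
      IsCoprime.of_isCoprime_of_dvd_right hcop hD0
    obtain ⟨a, b, hab⟩ := hc1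
    have hXc : (X + C ((m + 1 : ℕ) : K)).comp (X - C ((m + 1 : ℕ) : K)) = X := by
      rw [add_comp, X_comp, C_comp, sub_add_cancel]
    have hpc : IsCoprime p (D.comp (X - C ((m + 1 : ℕ) : K))) := by
      refine ⟨a.comp (X - C ((m + 1 : ℕ) : K)), b.comp (X - C ((m + 1 : ℕ) : K)), ?_⟩
      have := congrArg (fun u => u.comp (X - C ((m + 1 : ℕ) : K))) hab
      simpa [add_comp, mul_comp, comp_assoc, hXc] using this
    exact (hpc.pow_left).mul_right hw
  · -- the removing equation
    have e1 : m + r + 1 = m + 1 + r := by omega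
    have hLtop : O.coeff L (m + r + 1) = 0 := hLo.2 _ (by omega)
    rw [hprod, hLtop, mul_zero, sub_zero, e1, ← Function.iterate_succ_apply,
      symm_iterate_mul, symm_iterate_alg hσ]
    conv_rhs => rw [map_mul]
    rw [mul_assoc, heq, ← mul_assoc]

end Steps


/-- Lemma 2 (shift case, order bound): in the Ore algebra with `σ` the shift
`x ↦ x+1` and `δ = 0`, if `L = ℓ₀ + ⋯ + ℓ_r∂^r` with `ℓ₀, ℓ_r ≠ 0`, `p` is an
irreducible factor of `ℓ_r`, `p^k` is removable from `L` for some `k ≥ 1`, and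
`n` satisfies `gcd(σⁿ(p), ℓ₀) ≠ 1` and `gcd(σᵐ(p), ℓ₀) = 1` for all `m > n`,
then `p^k` is removable from `L` at order `n`. -/
theorem shift_removing_order_bound {K : Type*} [Field K] [CharZero K]
    {σ : RatFunc K ≃+* RatFunc K}
    (hσ : ∀ q : Polynomial K, σ (algebraMap (Polynomial K) (RatFunc K) q)
        = algebraMap (Polynomial K) (RatFunc K) (q.comp (X + 1)))
    (O : OreAlgebra (RatFunc K) σ (fun _ => 0))
    (L : O.carrier) (r : ℕ) (hL : O.IsPoly L) (hLo : O.HasOrder L r)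
    (ℓ0 ℓr : Polynomial K)
    (h0 : O.coeff L 0 = algebraMap (Polynomial K) (RatFunc K) ℓ0) (h0ne : ℓ0 ≠ 0)
    (hr : O.coeff L r = algebraMap (Polynomial K) (RatFunc K) ℓr) (hrne : ℓr ≠ 0)
    (p : Polynomial K) (hp : Irreducible p) (hpdvd : p ∣ ℓr)
    (k : ℕ) (hk : 1 ≤ k)
    (hrem : ∃ (n' : ℕ) (P : O.carrier), O.IsRemoving (p ^ k) L r P n')
    (n : ℕ)
    (hn1 : ¬ IsCoprime (p.comp (X + C (n : K))) ℓ0)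
    (hn2 : ∀ m : ℕ, n < m → IsCoprime (p.comp (X + C (m : K))) ℓ0) :
    ∃ P : O.carrier, O.IsRemoving (p ^ k) L r P n := by

  obtain ⟨n', P0, hP0⟩ := hrem
  have up : ∀ t m, (∃ P, O.IsRemoving (p ^ k) L r P m) →
      ∃ P, O.IsRemoving (p ^ k) L r P (m + t) := by
    intro t
    induction t with
    | zero => intro m h; exact h
    | succ t ih =>
        intro m h
        exact step_up hσ O (p ^ k) L r (m + t) (ih m h)
  have down : ∀ t, (∃ P, O.IsRemoving (p ^ k) L r P (n + t)) →
      ∃ P, O.IsRemoving (p ^ k) L r P n := by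
    intro t
    induction t with
    | zero => intro h; exact h
    | succ t ih =>
        intro h
        exact ih (step_down hσ O p k L r hL hLo ℓ0 h0 h0ne (n + t)
          (hn2 (n + t + 1) (by omega)) h)
  rcases le_total n' n with hle | hle
  · have h := up (n - n') n' ⟨P0, hP0⟩
    rwa [Nat.add_sub_cancel' hle] at h
  · apply down (n' - n)
    rw [Nat.add_sub_cancel' hle]
    exact ⟨P0, hP0⟩
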